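/- arXiv:1206.5352 — 2 statements merged into one kernel-verified Lean document; each statement's English description precedes it below -/
import Mathlib

section
/- Let c be the characteristic sequence of the powers of 2, i.e., c(n) = 1 if n is a power of 2 (n ∈ {1, 2, 4, 8, …}) and c(n) = 0 otherwise. Then for every r ≥ 2, the sequence c has exactly r + 2 distinct unbordered factors of length 2^r + 1. -/
/-- The factor x[i..i+n-1] of the infinite word x, as a list. -/
def factor {A : Type*} (x : ℕ → A) (i n : ℕ) : List A :=
  (List.range n).map fun t => x (i + t)

/-- The occurrence of the length-n factor at position i is novel. -/
def novel {A : Type*} (x : ℕ → A) (i n : ℕ) : Prop :=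
  ∀ j < i, factor x j n ≠ factor x i n

/-- The set of positions of novel occurrences of length-n factors. -/
def novelSet {A : Type*} (x : ℕ → A) (n : ℕ) : Set ℕ := {i | novel x i n}

-- The characteristic sequence of the powers of 2.
open Classical in
noncomputable def charPow2 : ℕ → ℕ := fun n =>
  if ∃ k : ℕ, n = 2 ^ k then 1 else 0

/-- A word is bordered if some nonempty word other than w itself is both a
prefix and a suffix of w. -/
def bordered {A : Type*} (w : List A) : Prop :=
  ∃ t : List A, t ≠ [] ∧ t ≠ w ∧ t <+: w ∧ t <:+ w

@[simp] lemma factor_length {A : Type*} (x : ℕ → A) (i n : ℕ) : (factor x i n).length = n := by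
  simp [factor]

lemma factor_getElem {A : Type*} (x : ℕ → A) (i n t : ℕ) (ht : t < n) :
    (factor x i n)[t]'(by simp [ht]) = x (i + t) := by
  simp [factor]

lemma charPow2_pow (k : ℕ) : charPow2 (2 ^ k) = 1 := if_pos ⟨k, rfl⟩

lemma charPow2_between {a n : ℕ} (h1 : 2 ^ a < n) (h2 : n < 2 ^ (a + 1)) : charPow2 n = 0 := by
  apply if_neg
  rintro ⟨k, rfl⟩
  have := (Nat.pow_lt_pow_iff_right (a := 2) one_lt_two).mp h1
  have := (Nat.pow_lt_pow_iff_right (a := 2) one_lt_two).mp h2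
  omega

lemma charPow2_eq_one {n : ℕ} (h : charPow2 n = 1) : ∃ k, n = 2 ^ k := by
  by_contra hc
  rw [charPow2, if_neg hc] at h
  omega

lemma charPow2_add_pow {k j : ℕ} (h : k < j) : charPow2 (2 ^ j + 2 ^ k) = 0 := by
  have hkj : (2:ℕ) ^ k < 2 ^ j := Nat.pow_lt_pow_right one_lt_two h
  have h2 : (2:ℕ) ^ (j + 1) = 2 ^ j + 2 ^ j := by ring
  have h0 : (0:ℕ) < 2 ^ k := pow_pos (by norm_num) k
  exact charPow2_between (a := j) (by omega) (by omega)

lemma factor_eq_iff {A : Type*} (x : ℕ → A) (i j n : ℕ) :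
    factor x i n = factor x j n ↔ ∀ t < n, x (i + t) = x (j + t) := by
  constructor
  · intro h t ht
    have := congrArg (fun l => l[t]?) h
    simpa [factor, List.getElem?_map, List.getElem?_range, ht] using this
  · intro h
    apply List.ext_getElem (by simp)
    intro t h1 h2
    rw [factor_getElem x i n t (by simpa using h1), factor_getElem x j n t (by simpa using h1)]
    exact h t (by simpa using h1)

lemma factor_prefix {A : Type*} (x : ℕ → A) (i : ℕ) {a n : ℕ} (h : a ≤ n) :
    factor x i a <+: factor x i n := by
  refine ⟨factor x (i + a) (n - a), ?_⟩
  apply List.ext_getElem (by simp; omega)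
  intro t h1 h2
  simp only [List.length_append, factor_length] at h1
  rcases Nat.lt_or_ge t a with ha | ha
  · rw [List.getElem_append_left (by simpa using ha)]
    rw [factor_getElem x i a t ha, factor_getElem x i n t (by omega)]
  · rw [List.getElem_append_right (by simpa using ha)]
    rw [factor_getElem x (i+a) (n-a) _ (by simp; omega), factor_getElem x i n t (by omega)]
    congr 1
    simp
    omega

lemma factor_suffix {A : Type*} (x : ℕ → A) (i : ℕ) {a n : ℕ} (h : a ≤ n) :
    factor x (i + (n - a)) a <:+ factor x i n := by
  refine ⟨factor x i (n - a), ?_⟩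
  apply List.ext_getElem (by simp; omega)
  intro t h1 h2
  simp only [List.length_append, factor_length] at h1
  rcases Nat.lt_or_ge t (n - a) with ha | ha
  · rw [List.getElem_append_left (by simpa using ha)]
    rw [factor_getElem x i (n-a) t ha, factor_getElem x i n t (by omega)]
  · rw [List.getElem_append_right (by simpa using ha)]
    rw [factor_getElem x (i + (n-a)) a _ (by simp; omega), factor_getElem x i n t (by omega)]
    congr 1
    simp
    omega

lemma prefix_factor_eq {A : Type*} {x : ℕ → A} {i n : ℕ} {t : List A} (h : t <+: factor x i n) :
    t = factor x i t.length := by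
  have hl : t.length ≤ n := by simpa using h.length_le
  have h1 := List.prefix_iff_eq_take.mp h
  have h2 := List.prefix_iff_eq_take.mp (factor_prefix x i hl)
  simp only [factor_length] at h2
  exact h1.trans h2.symm

lemma suffix_factor_eq {A : Type*} {x : ℕ → A} {i n : ℕ} {t : List A} (h : t <:+ factor x i n) :
    t = factor x (i + (n - t.length)) t.length := by
  have hl : t.length ≤ n := by simpa using h.length_le
  have h1 := List.suffix_iff_eq_drop.mp h
  have h2 := List.suffix_iff_eq_drop.mp (factor_suffix x i hl)
  simp only [factor_length] at h1 h2
  exact h1.trans h2.symm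

lemma bordered_factor_iff {A : Type*} (x : ℕ → A) (i n : ℕ) :
    bordered (factor x i n) ↔
      ∃ l, 0 < l ∧ l < n ∧ factor x i l = factor x (i + (n - l)) l := by
  constructor
  · rintro ⟨t, hne, hnw, hpre, hsuf⟩
    have hl : t.length ≤ n := by simpa using hpre.length_le
    refine ⟨t.length, List.length_pos_iff.mpr hne, ?_, ?_⟩
    · rcases Nat.lt_or_ge t.length n with h | h
      · exact h
      · exact absurd (List.IsPrefix.eq_of_length hpre (by simp; omega)) hnw
    · rw [← prefix_factor_eq hpre, ← suffix_factor_eq hsuf]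
  · rintro ⟨l, h0, hn, heq⟩
    refine ⟨factor x i l, ?_, ?_, factor_prefix x i hn.le, heq ▸ factor_suffix x i hn.le⟩
    · intro h; apply_fun List.length at h; simp at h; omega
    · intro h; apply_fun List.length at h; simp at h; omega

/-- The word 0^(2^r) 1. -/
noncomputable def wA (r : ℕ) : List ℕ := factor charPow2 (3 * 2 ^ r) (2 ^ r + 1)
/-- The word 1 0^(2^r). -/
noncomputable def wB (r : ℕ) : List ℕ := factor charPow2 (2 ^ (r + 2)) (2 ^ r + 1)
/-- The factor of length 2^r+1 starting at 2^k. -/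
noncomputable def wW (r k : ℕ) : List ℕ := factor charPow2 (2 ^ k) (2 ^ r + 1)

lemma pow_lt_pow_exp {a b : ℕ} (h : (2:ℕ)^a < 2^b) : a < b :=
  (Nat.pow_lt_pow_iff_right (a := 2) one_lt_two).mp h

lemma classify (r : ℕ) (hr : 2 ≤ r) (i : ℕ)
    (hub : ¬ bordered (factor charPow2 i (2 ^ r + 1))) :
    factor charPow2 i (2 ^ r + 1) = wA r ∨ factor charPow2 i (2 ^ r + 1) = wB r ∨
      ∃ k < r, i = 2 ^ k := by
  have hrpos : (0:ℕ) < 2 ^ r := pow_pos (by norm_num) r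
  have e1 : (2:ℕ) ^ (r + 1) = 2 * 2 ^ r := by ring
  have e2 : (2:ℕ) ^ (r + 2) = 4 * 2 ^ r := by ring
  have e3 : (2:ℕ) ^ (r + 3) = 8 * 2 ^ r := by ring
  by_cases hi : ∃ k, i = 2 ^ k
  · obtain ⟨k, rfl⟩ := hi
    by_cases hlast : ∃ j, 2 ^ k + 2 ^ r = 2 ^ j
    · exfalso; apply hub
      rw [bordered_factor_iff]
      refine ⟨1, one_pos, by omega, ?_⟩
      rw [factor_eq_iff]
      intro t ht
      have ht0 : t = 0 := by omega
      subst ht0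
      obtain ⟨j, hj⟩ := hlast
      have : 2 ^ k + (2 ^ r + 1 - 1) + 0 = 2 ^ j := by omega
      rw [this]
      simp [charPow2_pow]
    · rcases Nat.lt_or_ge k r with hk | hk
      · exact Or.inr (Or.inr ⟨k, hk, rfl⟩)
      · have hkr : r < k := by
          rcases Nat.eq_or_lt_of_le hk with rfl | h
          · exact absurd ⟨r + 1, by ring⟩ hlast
          · exact h
        have hklt : (2:ℕ) ^ r < 2 ^ k := Nat.pow_lt_pow_right one_lt_two hkr
        have hk2 : (2:ℕ) ^ (k + 1) = 2 * 2 ^ k := by ring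
        refine Or.inr (Or.inl ?_)
        rw [wB, factor_eq_iff]
        intro t ht
        rcases Nat.eq_zero_or_pos t with rfl | htp
        · simp [charPow2_pow]
        · rw [charPow2_between (a := k) (by omega) (by omega),
            charPow2_between (a := r + 2) (by omega) (by rw [show r+2+1 = r+3 by ring]; omega)]
  · by_cases hlast : ∃ j, i + 2 ^ r = 2 ^ j
    · obtain ⟨t, hti⟩ := hlast
      have hex : ∃ s, i ≤ 2 ^ s := ⟨i, (Nat.lt_two_pow_self (n := i)).le⟩
      set s := Nat.find hex with hsdef
      have hs : i ≤ 2 ^ s := Nat.find_spec hex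
      have hmin : ∀ j, i ≤ 2 ^ j → s ≤ j := fun j hj => Nat.find_min' hex hj
      have hsi : i < 2 ^ s := lt_of_le_of_ne hs (fun h => hi ⟨s, h⟩)
      have hst : s ≤ t := hmin t (by omega)
      have hnopow : ∀ q, i ≤ q → q < 2 ^ s → charPow2 q = 0 := by
        intro q h1 h2
        apply if_neg
        rintro ⟨j, rfl⟩
        have := hmin j h1
        exact absurd h2 (not_lt.2 (Nat.pow_le_pow_right (by norm_num) this))
      rcases Nat.eq_or_lt_of_le hst with heq | hst
      · -- single 1: w = wA r
        left
        rw [wA, factor_eq_iff]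
        intro q hq
        rcases Nat.lt_or_ge q (2 ^ r) with hq2 | hq2
        · rw [hnopow (i + q) (by omega) (by rw [heq]; omega),
            charPow2_between (a := r + 1) (by omega) (by rw [show r+1+1 = r+2 by ring]; omega)]
        · have hq3 : q = 2 ^ r := by omega
          subst hq3
          rw [hti, show 3 * 2 ^ r + 2 ^ r = 2 ^ (r + 2) by rw [e2]; ring]
          simp [charPow2_pow]
      · -- bordered via 0^p 1
        exfalso; apply hub
        rw [bordered_factor_iff]
        have hspos : (0:ℕ) < 2 ^ s := pow_pos (by norm_num) s
        have hs1 : (2:ℕ) ^ (s + 1) ≤ 2 ^ t := Nat.pow_le_pow_right (by norm_num) hst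
        have hs1' : (2:ℕ) ^ (s + 1) = 2 * 2 ^ s := by ring
        set p := 2 ^ s - i with hpdef
        have hp1 : 1 ≤ p := by omega
        have hp2 : p + 1 < 2 ^ r + 1 := by omega
        refine ⟨p + 1, by omega, hp2, ?_⟩
        rw [factor_eq_iff]
        intro q hq
        have ht1 : 1 ≤ t := by omega
        have het : (2:ℕ) ^ t = 2 * 2 ^ (t - 1) := by
          have h := pow_succ' 2 (t - 1)
          rwa [Nat.sub_add_cancel ht1] at h
        have hpt : p < 2 ^ (t - 1) := by
          rcases Nat.eq_zero_or_pos i with rfl | hipos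
          · have hs0 : s = 0 := Nat.le_zero.mp (hmin 0 (by norm_num))
            have hp0 : p = 1 := by rw [hpdef, hs0]; simp
            have htr : t = r := Nat.pow_right_injective (le_refl 2) (by simpa using hti.symm)
            have h21 : (2:ℕ) ^ 1 ≤ 2 ^ (t - 1) := Nat.pow_le_pow_right (by norm_num) (by omega)
            simp at h21
            omega
          · have : (2:ℕ) ^ s ≤ 2 ^ (t - 1) := Nat.pow_le_pow_right (by norm_num) (by omega)
            omega
        rcases Nat.lt_or_ge q p with hqp | hqp
        · rw [hnopow (i + q) (by omega) (by omega),
            charPow2_between (a := t - 1) (by omega) (by rw [show t-1+1 = t by omega]; omega)]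
        · have hq3 : q = p := by omega
          subst hq3
          rw [show i + p = 2 ^ s by omega,
            show i + (2 ^ r + 1 - (p + 1)) + p = 2 ^ t by omega]
          simp [charPow2_pow]
    · exfalso; apply hub
      rw [bordered_factor_iff]
      refine ⟨1, one_pos, by omega, ?_⟩
      rw [factor_eq_iff]
      intro q hq
      have hq0 : q = 0 := by omega
      subst hq0
      rw [show i + 0 = i by omega, show i + (2 ^ r + 1 - 1) + 0 = i + 2 ^ r by omega]
      rw [charPow2, if_neg hi, charPow2, if_neg hlast]

lemma wA_unbordered (r : ℕ) (hr : 2 ≤ r) : ¬ bordered (wA r) := by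
  have hrpos : (0:ℕ) < 2 ^ r := pow_pos (by norm_num) r
  have e1 : (2:ℕ) ^ (r + 1) = 2 * 2 ^ r := by ring
  have e2 : (2:ℕ) ^ (r + 2) = 4 * 2 ^ r := by ring
  rw [wA, bordered_factor_iff]
  rintro ⟨l, h0, hn, heq⟩
  rw [factor_eq_iff] at heq
  have h := heq (l - 1) (by omega)
  rw [show 3 * 2 ^ r + (2 ^ r + 1 - l) + (l - 1) = 2 ^ (r + 2) by omega] at h
  rw [charPow2_pow,
    charPow2_between (a := r + 1) (n := 3 * 2 ^ r + (l - 1)) (by omega)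
      (by rw [show r + 1 + 1 = r + 2 by ring]; omega)] at h
  exact absurd h (by norm_num)

lemma wB_unbordered (r : ℕ) (hr : 2 ≤ r) : ¬ bordered (wB r) := by
  have hrpos : (0:ℕ) < 2 ^ r := pow_pos (by norm_num) r
  have e2 : (2:ℕ) ^ (r + 2) = 4 * 2 ^ r := by ring
  have e3 : (2:ℕ) ^ (r + 3) = 8 * 2 ^ r := by ring
  rw [wB, bordered_factor_iff]
  rintro ⟨l, h0, hn, heq⟩
  rw [factor_eq_iff] at heq
  have h := heq 0 h0
  simp only [Nat.add_zero] at h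
  rw [charPow2_pow,
    charPow2_between (a := r + 2) (n := 2 ^ (r + 2) + (2 ^ r + 1 - l)) (by omega)
      (by rw [show r + 2 + 1 = r + 3 by ring]; omega)] at h
  exact absurd h (by norm_num)

lemma wW_unbordered (r k : ℕ) (hr : 2 ≤ r) (hk : k < r) : ¬ bordered (wW r k) := by
  have hrpos : (0:ℕ) < 2 ^ r := pow_pos (by norm_num) r
  have e1 : (2:ℕ) ^ (r + 1) = 2 * 2 ^ r := by ring
  have hkr : (2:ℕ) ^ k < 2 ^ r := Nat.pow_lt_pow_right one_lt_two hk
  have hk1 : (2:ℕ) ^ (k + 1) = 2 ^ k + 2 ^ k := by ring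
  rw [wW, bordered_factor_iff]
  rintro ⟨l, h0, hn, heq⟩
  rw [factor_eq_iff] at heq
  have h := heq 0 h0
  simp only [Nat.add_zero] at h
  rw [charPow2_pow] at h
  obtain ⟨j, hj⟩ := charPow2_eq_one h.symm
  have hkj : k < j := pow_lt_pow_exp (by omega)
  have hjr : j ≤ r := by
    have h1 : (2:ℕ) ^ j < 2 ^ (r + 1) := by omega
    have := pow_lt_pow_exp h1
    omega
  have hjr2 : (2:ℕ) ^ j ≤ 2 ^ r := Nat.pow_le_pow_right (by norm_num) hjr
  have hkpos : (0:ℕ) < 2 ^ k := pow_pos (by norm_num) k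
  have hlk : 2 ^ k < l := by omega
  have h2 := heq (2 ^ k) hlk
  rw [show 2 ^ k + 2 ^ k = 2 ^ (k + 1) by omega, charPow2_pow] at h2
  rw [show 2 ^ k + (2 ^ r + 1 - l) + 2 ^ k = 2 ^ j + 2 ^ k by omega,
    charPow2_add_pow hkj] at h2
  exact absurd h2 (by norm_num)

lemma wA_ne_wB (r : ℕ) (hr : 2 ≤ r) : wA r ≠ wB r := by
  have hrpos : (0:ℕ) < 2 ^ r := pow_pos (by norm_num) r
  have e1 : (2:ℕ) ^ (r + 1) = 2 * 2 ^ r := by ring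
  have e2 : (2:ℕ) ^ (r + 2) = 4 * 2 ^ r := by ring
  intro h
  rw [wA, wB, factor_eq_iff] at h
  have := h 0 (by omega)
  simp only [Nat.add_zero] at this
  rw [charPow2_pow,
    charPow2_between (a := r + 1) (n := 3 * 2 ^ r) (by omega)
      (by rw [show r + 1 + 1 = r + 2 by ring]; omega)] at this
  exact absurd this (by norm_num)

lemma wA_ne_wW (r k : ℕ) (hr : 2 ≤ r) : wA r ≠ wW r k := by
  have hrpos : (0:ℕ) < 2 ^ r := pow_pos (by norm_num) r
  have e1 : (2:ℕ) ^ (r + 1) = 2 * 2 ^ r := by ring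
  have e2 : (2:ℕ) ^ (r + 2) = 4 * 2 ^ r := by ring
  intro h
  rw [wA, wW, factor_eq_iff] at h
  have := h 0 (by omega)
  simp only [Nat.add_zero] at this
  rw [charPow2_pow,
    charPow2_between (a := r + 1) (n := 3 * 2 ^ r) (by omega)
      (by rw [show r + 1 + 1 = r + 2 by ring]; omega)] at this
  exact absurd this (by norm_num)

lemma wB_ne_wW (r k : ℕ) (hr : 2 ≤ r) (hk : k < r) : wB r ≠ wW r k := by
  have hrpos : (0:ℕ) < 2 ^ r := pow_pos (by norm_num) r
  have e2 : (2:ℕ) ^ (r + 2) = 4 * 2 ^ r := by ring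
  have e3 : (2:ℕ) ^ (r + 3) = 8 * 2 ^ r := by ring
  have hkr : (2:ℕ) ^ k < 2 ^ r := Nat.pow_lt_pow_right one_lt_two hk
  have hkpos : (0:ℕ) < 2 ^ k := pow_pos (by norm_num) k
  intro h
  rw [wB, wW, factor_eq_iff] at h
  have := h (2 ^ k) (by omega)
  rw [show 2 ^ k + 2 ^ k = 2 ^ (k + 1) by rw [pow_succ]; ring, charPow2_pow,
    charPow2_between (a := r + 2) (n := 2 ^ (r + 2) + 2 ^ k) (by omega)
      (by rw [show r + 2 + 1 = r + 3 by ring]; omega)] at this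
  exact absurd this (by norm_num)

lemma wW_ne_wW (r k k' : ℕ) (hr : 2 ≤ r) (hk : k < r) (hk' : k' < r) (hkk : k < k') :
    wW r k ≠ wW r k' := by
  have hrpos : (0:ℕ) < 2 ^ r := pow_pos (by norm_num) r
  have hkr : (2:ℕ) ^ k < 2 ^ r := Nat.pow_lt_pow_right one_lt_two hk
  intro h
  rw [wW, wW, factor_eq_iff] at h
  have := h (2 ^ k) (by omega)
  rw [show 2 ^ k + 2 ^ k = 2 ^ (k + 1) by rw [pow_succ]; ring, charPow2_pow,
    show 2 ^ k' + 2 ^ k = 2 ^ k' + 2 ^ k by rfl, charPow2_add_pow hkk] at this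
  exact absurd this (by norm_num)

theorem card_unbordered_charPow2 (r : ℕ) (hr : 2 ≤ r) :
    Set.ncard {w : List ℕ | (∃ i, w = factor charPow2 i (2 ^ r + 1)) ∧ ¬ bordered w} =
      r + 2 := by
  classical
  have hset : {w : List ℕ | (∃ i, w = factor charPow2 i (2 ^ r + 1)) ∧ ¬ bordered w}
      = ↑(insert (wA r) (insert (wB r) ((Finset.range r).image (wW r)))) := by
    ext w
    rw [Set.mem_setOf_eq, Finset.mem_coe, Finset.mem_insert, Finset.mem_insert,
      Finset.mem_image]
    constructor
    · rintro ⟨⟨i, rfl⟩, hub⟩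
      rcases classify r hr i hub with h | h | ⟨k, hk, rfl⟩
      · exact Or.inl h
      · exact Or.inr (Or.inl h)
      · exact Or.inr (Or.inr ⟨k, Finset.mem_range.mpr hk, rfl⟩)
    · rintro (rfl | rfl | ⟨k, hk, rfl⟩)
      · exact ⟨⟨_, rfl⟩, wA_unbordered r hr⟩
      · exact ⟨⟨_, rfl⟩, wB_unbordered r hr⟩
      · exact ⟨⟨_, rfl⟩, wW_unbordered r k hr (Finset.mem_range.mp hk)⟩
  have hinj : Set.InjOn (wW r) ↑(Finset.range r) := by
    intro a ha b hb hab
    simp only [Finset.coe_range, Set.mem_Iio] at ha hb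
    by_contra hne
    rcases Nat.lt_or_ge a b with h | h
    · exact wW_ne_wW r a b hr ha hb h hab
    · exact wW_ne_wW r b a hr hb ha (by omega) hab.symm
  have hBnot : wB r ∉ (Finset.range r).image (wW r) := by
    rw [Finset.mem_image]
    rintro ⟨k, hk, hkw⟩
    exact wB_ne_wW r k hr (Finset.mem_range.mp hk) hkw.symm
  have hAnot : wA r ∉ insert (wB r) ((Finset.range r).image (wW r)) := by
    rw [Finset.mem_insert, Finset.mem_image]
    rintro (h | ⟨k, hk, hkw⟩)
    · exact wA_ne_wB r hr h
    · exact wA_ne_wW r k hr hkw.symm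
  rw [hset, Set.ncard_coe_finset, Finset.card_insert_of_notMem hAnot,
    Finset.card_insert_of_notMem hBnot, Finset.card_image_of_injOn hinj,
    Finset.card_range]
end

section
/- If x and y are primitive words of the same length and x^p = u·y^p·v as factors of a common word in the sense that some occurrence of x^p and some occurrence of y^p in a word z overlap in at least |x| consecutive positions with p ≥ 2, then x is a conjugate of y. Concretely: if z is a word, z[i..i+p|x|−1] = x^p, z[j..j+p|x|−1] = y^p with |x| = |y|, p ≥ 2, and |i − j| ≤ (p−1)|x|, then x and y are conjugates. -/
/-- x^k : the word x repeated k times. -/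
def wpow {A : Type*} (x : List A) : ℕ → List A
  | 0 => []
  | k + 1 => x ++ wpow x k

/-- A word is a power if it is x^k for some word x and k ≥ 2. -/
def isPower {A : Type*} (w : List A) : Prop := ∃ x k, 2 ≤ k ∧ w = wpow x k

/-- w has period p. -/
def hasPeriod {A : Type*} (w : List A) (p : ℕ) : Prop :=
  ∀ i, i + p < w.length → w[i + p]? = w[i]?

/-- u and v are conjugate words. -/
def conjugate {A : Type*} (u v : List A) : Prop := ∃ s t, u = s ++ t ∧ v = t ++ s

/-- A nonempty word is primitive if it is not a power. -/
def primitive {A : Type*} (x : List A) : Prop := x ≠ [] ∧ ¬ isPower x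

lemma wpow_length {A : Type*} (x : List A) (k : ℕ) : (wpow x k).length = k * x.length := by
  induction k with
  | zero => simp [wpow]
  | succ k ih => simp [wpow, ih, Nat.succ_mul]; ring

lemma wpow_getElem? {A : Type*} (x : List A) (k s : ℕ) (hs : s < k * x.length) :
    (wpow x k)[s]? = x[s % x.length]? := by
  induction k generalizing s with
  | zero => simp at hs
  | succ k ih =>
    rw [Nat.succ_mul] at hs
    by_cases h : s < x.length
    · rw [wpow, List.getElem?_append, if_pos h, Nat.mod_eq_of_lt h]
    · push_neg at h
      rw [wpow, List.getElem?_append, if_neg (by omega), ih (s - x.length) (by omega)]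
      congr 1
      rw [Nat.mod_eq_sub_mod h]

lemma factor_getElem? {A : Type*} (z : ℕ → A) (i n t : ℕ) (ht : t < n) :
    (factor z i n)[t]? = some (z (i + t)) := by
  simp [factor, List.getElem?_map, ht]

lemma rot_of_overlap {A : Type*} (z : ℕ → A) (x y : List A) (p i j n : ℕ) (hn : 0 < n)
    (hxl : x.length = n) (hyl : y.length = n)
    (hij : i ≤ j) (hd : j + n ≤ i + p * n)
    (hzx : factor z i (p * n) = wpow x p) (hzy : factor z j (p * n) = wpow y p) :
    ∃ r, y = x.drop r ++ x.take r := by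
  set d := j - i with hdd
  set r := d % n with hr
  have hrn : r < n := Nat.mod_lt _ hn
  refine ⟨r, List.ext_getElem? fun t => ?_⟩
  by_cases ht : t < n
  · have h1 : y[t]? = some (z (j + t)) := by
      have := factor_getElem? z j (p * n) t (by nlinarith)
      rw [hzy, wpow_getElem?] at this
      · rw [hyl] at this; rwa [Nat.mod_eq_of_lt ht] at this
      · rw [hyl]; nlinarith
    have h2 : x[(r + t) % n]? = some (z (j + t)) := by
      have hdt : d + t < p * n := by omega
      have := factor_getElem? z i (p * n) (d + t) hdt
      rw [hzx, wpow_getElem? _ _ _ (by rwa [hxl])] at this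
      rw [hxl] at this
      have e1 : i + (d + t) = j + t := by omega
      have e2 : (d + t) % n = (r + t) % n := by
        conv_lhs => rw [Nat.add_mod, Nat.mod_eq_of_lt ht]
      rw [e1, e2] at this
      exact this
    rw [h1]
    by_cases hc : r + t < n
    · rw [List.getElem?_append, if_pos (by simp [hxl]; omega), List.getElem?_drop,
        Nat.mod_eq_of_lt hc] at *
      rw [← h2]
    · push_neg at hc
      have hlt : r + t - n < n := by omega
      rw [List.getElem?_append, if_neg (by simp [hxl]; omega)]
      have e3 : t - (x.drop r).length = r + t - n := by simp [hxl]; omega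
      rw [e3, List.getElem?_take, if_pos (by omega)]
      rw [Nat.mod_eq_sub_mod hc, Nat.mod_eq_of_lt hlt] at h2
      exact h2.symm
  · push_neg at ht
    rw [List.getElem?_eq_none (by omega), List.getElem?_eq_none (by simp [hxl]; omega)]

theorem conjugate_of_overlapping_powers {A : Type*} (z : ℕ → A) (x y : List A)
    (p i j : ℕ) (hx : primitive x) (hy : primitive y) (hlen : x.length = y.length)
    (hp : 2 ≤ p)
    (hzx : factor z i (p * x.length) = wpow x p)
    (hzy : factor z j (p * x.length) = wpow y p)
    (hij : i ≤ j + (p - 1) * x.length) (hji : j ≤ i + (p - 1) * x.length) :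
    conjugate x y := by
  set n := x.length with hnd
  have hn : 0 < n := List.length_pos_iff.mpr hx.1
  have hpn : (p - 1) * n + n = p * n := by
    rcases p with _ | q
    · omega
    · simp [Nat.succ_mul]
  rcases le_total i j with h | h
  · obtain ⟨r, hr⟩ := rot_of_overlap z x y p i j n hn rfl hlen.symm h (by omega) hzx hzy
    exact ⟨x.take r, x.drop r, (List.take_append_drop r x).symm, hr⟩
  · obtain ⟨r, hr⟩ := rot_of_overlap z y x p j i n hn hlen.symm rfl h (by omega) hzy hzx
    exact ⟨y.drop r, y.take r, hr, (List.take_append_drop r y).symm⟩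
end
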